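/- A function p : Ψ → ℤ, α ↦ p_α, satisfies p_{s_α(β)} = p_β − ⟨β,α∨⟩·p_α for all α,β ∈ Ψ if and only if there exists f ∈ Ω(Ψ) with p_α = f(α) for all α ∈ Ψ. In that case f is unique; consequently such a function p is uniquely determined by its restriction to Γ, and every function Γ → ℤ is the restriction of exactly one such p. -/

import Mathlib

open Module Submodule

variable {V : Type*}

/-- For `A, B ⊆ ℤ` and `c : ℤ`, the set `A - c·B = {a - c*b | a ∈ A, b ∈ B}`. -/
def zdiff (A : Set ℤ) (c : ℤ) (B : Set ℤ) : Set ℤ := {z | ∃ a ∈ A, ∃ b ∈ B, z = a - c * b}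

/-- The set `n·ℤ` of integer multiples of `n`. -/
def zmul (n : ℤ) : Set ℤ := {z | ∃ k : ℤ, z = n * k}

/-- Minkowski sum of two sets of integers. -/
def msum (A B : Set ℤ) : Set ℤ := {z | ∃ a ∈ A, ∃ b ∈ B, z = a + b}

section
variable [AddCommGroup V] [Module ℝ V]

/-- `Ψ` is a root subsystem of `Φ` (with coroot assignment `cv`):
`Ψ ⊆ Φ` and `s_α(β) = β - ⟨β,α∨⟩•α ∈ Ψ` for all `α, β ∈ Ψ`. -/
def IsRootSubsystem (Φ : Set V) (cv : V → Module.Dual ℝ V) (Ψ : Set V) : Prop :=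
  Ψ ⊆ Φ ∧ ∀ α ∈ Ψ, ∀ β ∈ Ψ, β - cv α β • α ∈ Ψ

/-- `Z : V → Set ℤ` is a root function for `Φ`:
`Z β - ⟨β,α∨⟩·Z α ⊆ Z (s_α β)` for all `α, β ∈ Φ`.
Here `pairInt β α` is the integer `⟨β, α∨⟩`. -/
def IsRootFunction (Φ : Set V) (cv : V → Module.Dual ℝ V) (pairInt : V → V → ℤ)
    (Z : V → Set ℤ) : Prop :=
  ∀ α ∈ Φ, ∀ β ∈ Φ, zdiff (Z β) (pairInt β α) (Z α) ⊆ Z (β - cv α β • α)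

/-- `S` is a root subsystem of the loop extension `Φ × ℤ`:
`S ⊆ Φ × ℤ` and `S` is closed under the reflections
`ŝ_(α,m) (β,n) = (s_α β, n - m·⟨β,α∨⟩)`. -/
def IsLoopSubsystem (Φ : Set V) (cv : V → Module.Dual ℝ V) (pairInt : V → V → ℤ)
    (S : Set (V × ℤ)) : Prop :=
  (∀ p ∈ S, p.1 ∈ Φ) ∧
  ∀ p ∈ S, ∀ q ∈ S, (q.1 - cv p.1 q.1 • p.1, q.2 - p.2 * pairInt q.1 p.1) ∈ S

/-- The group `W_Ψ` of linear automorphisms of `V` generated by the reflections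
`s_α : v ↦ v - ⟨v,α∨⟩•α` for `α ∈ Ψ`. -/
def WGroup (cv : V → Module.Dual ℝ V) (Ψ : Set V) (h2 : ∀ α ∈ Ψ, cv α α = 2) :
    Subgroup (V ≃ₗ[ℝ] V) :=
  Subgroup.closure {w | ∃ α, ∃ hα : α ∈ Ψ, w = Module.reflection (h2 α hα)}

/-- `X(α) = {f(α) | f ∈ X}` for a set `X` of coweights (elements of `Ω(Ψ) = Hom_ℤ(ℤΨ, ℤ)`,
where `ℤΨ = span ℤ Γ`). -/
def Xval (Γ : Set V) (X : Set (span ℤ (Γ : Set V) →ₗ[ℤ] ℤ)) {α : V}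
    (h : α ∈ span ℤ Γ) : Set ℤ :=
  {z | ∃ f ∈ X, f ⟨α, h⟩ = z}

/-- `X` is an admissible subgroup of the coweight lattice `Ω(Ψ) = Hom_ℤ(ℤΨ, ℤ)`
(`ℤΨ = span ℤ Γ`): there is `N : Ψ → ℕ` with `n_β ∣ ⟨β,α∨⟩·n_α` for all `α, β ∈ Ψ` and
`n_{w(α)} = n_α` for all `α ∈ Ψ`, `w ∈ W_Ψ`, such that
`X = {f ∈ Ω(Ψ) | f(α) ∈ n_α·ℤ for all α ∈ Ψ}`. -/
def IsAdmissibleSubgroup (cv : V → Module.Dual ℝ V) (pairInt : V → V → ℤ)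
    (Γ Ψ : Set V) (h2Ψ : ∀ α ∈ Ψ, cv α α = 2) (hspan : ∀ α ∈ Ψ, α ∈ span ℤ Γ)
    (X : AddSubgroup (span ℤ (Γ : Set V) →ₗ[ℤ] ℤ)) : Prop :=
  ∃ N : V → ℕ,
    (∀ α ∈ Ψ, ∀ β ∈ Ψ, (N β : ℤ) ∣ pairInt β α * N α) ∧
    (∀ α ∈ Ψ, ∀ w ∈ WGroup cv Ψ h2Ψ, N (w α) = N α) ∧
    ((X : Set (span ℤ (Γ : Set V) →ₗ[ℤ] ℤ)) =
      {f | ∀ α, ∀ hα : α ∈ Ψ, (N α : ℤ) ∣ f ⟨α, hspan α hα⟩})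

end

variable [AddCommGroup V] [Module ℝ V]

theorem stmt4
    (Φ : Set V) (cv : V → Module.Dual ℝ V) (pairInt : V → V → ℤ)
    (hne : ∀ α ∈ Φ, α ≠ 0)
    (h2 : ∀ α ∈ Φ, cv α α = 2)
    (hpair : ∀ α ∈ Φ, ∀ β ∈ Φ, (pairInt β α : ℝ) = cv α β)
    (hrefl : ∀ α ∈ Φ, (fun β => β - cv α β • α) '' Φ = Φ)
    (Γ Ψ : Set V) (hΓΦ : Γ ⊆ Φ)
    (hli : LinearIndependent ℝ (fun γ : Γ => (γ : V)))
    (hΨΦ : Ψ ⊆ Φ) (hΨcl : ∀ α ∈ Ψ, ∀ β ∈ Ψ, β - cv α β • α ∈ Ψ)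
    (hΓΨ : Γ ⊆ Ψ)
    (hmin : ∀ Ψ', IsRootSubsystem Φ cv Ψ' → Γ ⊆ Ψ' → Ψ ⊆ Ψ')
    (hspan : ∀ α ∈ Ψ, α ∈ span ℤ Γ)
    (p : V → ℤ) :
    ((∀ α ∈ Ψ, ∀ β ∈ Ψ, p (β - cv α β • α) = p β - pairInt β α * p α) ↔
      ∃ f : span ℤ Γ →ₗ[ℤ] ℤ, ∀ α, ∀ hα : α ∈ Ψ, p α = f ⟨α, hspan α hα⟩) ∧
    (∀ f g : span ℤ Γ →ₗ[ℤ] ℤ,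
      (∀ α, ∀ hα : α ∈ Ψ, p α = f ⟨α, hspan α hα⟩) →
      (∀ α, ∀ hα : α ∈ Ψ, p α = g ⟨α, hspan α hα⟩) → f = g) ∧
    ((∀ α ∈ Ψ, ∀ β ∈ Ψ, p (β - cv α β • α) = p β - pairInt β α * p α) →
      ∀ q : V → ℤ,
        (∀ α ∈ Ψ, ∀ β ∈ Ψ, q (β - cv α β • α) = q β - pairInt β α * q α) →
        (∀ γ ∈ Γ, q γ = p γ) → ∀ α ∈ Ψ, q α = p α) ∧
    (∀ g : V → ℤ, ∃ q : V → ℤ,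
      (∀ α ∈ Ψ, ∀ β ∈ Ψ, q (β - cv α β • α) = q β - pairInt β α * q α) ∧
      ∀ γ ∈ Γ, q γ = g γ) := by

  -- ℤ-linear independence of Γ
  have hliZ : LinearIndependent ℤ (fun γ : Γ => (γ : V)) := by
    refine hli.restrict_scalars ?_
    intro a b hab
    have : (a : ℝ) = (b : ℝ) := by simpa [zsmul_eq_mul] using hab
    exact_mod_cast this
  -- a basis of the span
  have e : span ℤ (Set.range fun γ : Γ => (γ : V)) = span ℤ Γ := by rw [Subtype.range_coe]
  let b : Basis Γ ℤ (span ℤ (Γ : Set V)) :=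
    (Basis.span hliZ).map (LinearEquiv.ofEq _ _ e)
  have hb : ∀ γ : Γ, (b γ : V) = γ := by
    intro γ
    simp only [b, Basis.map_apply]
    rw [show ((LinearEquiv.ofEq _ _ e) ((Basis.span hliZ) γ) : V) = ((Basis.span hliZ) γ : V)
      from rfl]
    exact congrArg Subtype.val (Basis.span_apply hliZ γ)
  have hbeq : ∀ (γ : V) (hγ : γ ∈ Γ), b ⟨γ, hγ⟩ = ⟨γ, hspan γ (hΓΨ hγ)⟩ :=
    fun γ hγ => Subtype.ext (hb ⟨γ, hγ⟩)
  -- existence of a linear map with prescribed values on Γ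
  have exist : ∀ g : V → ℤ, ∃ f : span ℤ Γ →ₗ[ℤ] ℤ,
      ∀ γ, ∀ hγ : γ ∈ Γ, f ⟨γ, hspan γ (hΓΨ hγ)⟩ = g γ := by
    intro g
    refine ⟨b.constr ℤ (fun γ => g γ), fun γ hγ => ?_⟩
    rw [← hbeq γ hγ, Basis.constr_basis]
  -- uniqueness of linear maps agreeing on Γ
  have uniq : ∀ f g : span ℤ Γ →ₗ[ℤ] ℤ,
      (∀ γ, ∀ hγ : γ ∈ Γ, f ⟨γ, hspan γ (hΓΨ hγ)⟩ = g ⟨γ, hspan γ (hΓΨ hγ)⟩) → f = g := by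
    intro f g h
    refine b.ext fun γ => ?_
    obtain ⟨γ, hγ⟩ := γ
    rw [hbeq γ hγ]
    exact h γ hγ
  -- the cocycle identity for linear maps
  have key : ∀ (f : span ℤ Γ →ₗ[ℤ] ℤ), ∀ α, ∀ hα : α ∈ Ψ, ∀ β, ∀ hβ : β ∈ Ψ,
      f ⟨β - cv α β • α, hspan _ (hΨcl α hα β hβ)⟩ =
        f ⟨β, hspan β hβ⟩ - pairInt β α * f ⟨α, hspan α hα⟩ := by
    intro f α hα β hβ
    have hv : β - cv α β • α = β - pairInt β α • α := by
      rw [← hpair α (hΨΦ hα) β (hΨΦ hβ), Int.cast_smul_eq_zsmul]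
    have hx : (⟨β - cv α β • α, hspan _ (hΨcl α hα β hβ)⟩ : span ℤ (Γ : Set V)) =
        ⟨β, hspan β hβ⟩ - pairInt β α • ⟨α, hspan α hα⟩ := by
      apply Subtype.ext
      simpa using hv
    rw [hx, map_sub, map_smul, smul_eq_mul]
  -- any cocycle is represented by a linear map
  have repr : ∀ r : V → ℤ,
      (∀ α ∈ Ψ, ∀ β ∈ Ψ, r (β - cv α β • α) = r β - pairInt β α * r α) →
      ∃ f : span ℤ Γ →ₗ[ℤ] ℤ, ∀ α, ∀ hα : α ∈ Ψ, r α = f ⟨α, hspan α hα⟩ := by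
    intro r hr
    obtain ⟨f, hf⟩ := exist r
    refine ⟨f, ?_⟩
    set Ψ' : Set V := {α | ∃ h : α ∈ Ψ, r α = f ⟨α, hspan α h⟩} with hΨ'
    have hsub : IsRootSubsystem Φ cv Ψ' := by
      constructor
      · rintro α ⟨h, -⟩; exact hΨΦ h
      · rintro α ⟨hα, hrα⟩ β ⟨hβ, hrβ⟩
        exact ⟨hΨcl α hα β hβ, by
          rw [hr α hα β hβ, hrα, hrβ, key f α hα β hβ]⟩
    have hΨΨ' : Ψ ⊆ Ψ' := hmin Ψ' hsub (fun γ hγ => ⟨hΓΨ hγ, (hf γ hγ).symm⟩)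
    intro α hα
    obtain ⟨h', e'⟩ := hΨΨ' hα
    exact e'
  refine ⟨⟨fun hp => repr p hp, ?_⟩, ?_, ?_, ?_⟩
  · rintro ⟨f, hf⟩ α hα β hβ
    rw [hf _ (hΨcl α hα β hβ), hf β hβ, hf α hα, key f α hα β hβ]
  · intro f g hf hg
    refine uniq f g fun γ hγ => ?_
    rw [← hf γ (hΓΨ hγ), ← hg γ (hΓΨ hγ)]
  · intro hp q hq hagree α hα
    obtain ⟨f, hf⟩ := repr p hp
    obtain ⟨g, hg⟩ := repr q hq
    have : g = f := uniq g f fun γ hγ => by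
      rw [← hg γ (hΓΨ hγ), ← hf γ (hΓΨ hγ), hagree γ hγ]
    rw [hg α hα, hf α hα, this]
  · intro g
    classical
    obtain ⟨f, hf⟩ := exist g
    refine ⟨fun α => if h : α ∈ span ℤ (Γ : Set V) then f ⟨α, h⟩ else 0, ?_, ?_⟩
    · intro α hα β hβ
      beta_reduce
      rw [dif_pos (hspan _ (hΨcl α hα β hβ)), dif_pos (hspan β hβ), dif_pos (hspan α hα)]
      exact key f α hα β hβ
    · intro γ hγ
      beta_reduce
      rw [dif_pos (hspan γ (hΓΨ hγ))]
      exact hf γ hγ
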